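/- Let G be a polycyclic-by-finite group. If the non-abelian tensor square [G,G^φ] ≤ ν(G) is periodic, then G is finite. -/

import Mathlib

open Monoid
open scoped commutatorElement

/-- A pair of compatible (right) actions of groups `G` and `H` on each other,
in the sense of Brown–Loday.  `aGH g h` denotes `g ^ h` and `aHG h g` denotes `h ^ g`. -/
structure CompatibleActions (G H : Type*) [Group G] [Group H] where
  aGH : G → H → G
  aHG : H → G → H
  aGH_one : ∀ g, aGH g 1 = g
  aGH_mul : ∀ g h₁ h₂, aGH g (h₁ * h₂) = aGH (aGH g h₁) h₂
  aGH_hom : ∀ g₁ g₂ h, aGH (g₁ * g₂) h = aGH g₁ h * aGH g₂ h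
  aHG_one : ∀ h, aHG h 1 = h
  aHG_mul : ∀ h g₁ g₂, aHG h (g₁ * g₂) = aHG (aHG h g₁) g₂
  aHG_hom : ∀ h₁ h₂ g, aHG (h₁ * h₂) g = aHG h₁ g * aHG h₂ g
  compat₁ : ∀ g g₁ h, aGH g (aHG h g₁) = g₁⁻¹ * aGH (g₁ * g * g₁⁻¹) h * g₁
  compat₂ : ∀ h h₁ g, aHG h (aGH g h₁) = h₁⁻¹ * aHG (h₁ * h * h₁⁻¹) g * h₁

variable {G H : Type*} [Group G] [Group H]

/-- Relators of the group `η(G,H)`: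
`[g,h^φ]^{g₁} = [g^{g₁}, (h^{g₁})^φ]` and `[g,h^φ]^{h₁^φ} = [g^{h₁}, (h^{h₁})^φ]`. -/
def etaRels (c : CompatibleActions G H) : Set (Coprod G H) :=
  let iG : G →* Coprod G H := Coprod.inl
  let iH : H →* Coprod G H := Coprod.inr
  (Set.range fun p : G × G × H =>
    ((iG p.1)⁻¹ * ⁅iG p.2.1, iH p.2.2⁆ * iG p.1) *
      ⁅iG (p.1⁻¹ * p.2.1 * p.1), iH (c.aHG p.2.2 p.1)⁆⁻¹) ∪
  (Set.range fun p : H × G × H =>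
    ((iH p.1)⁻¹ * ⁅iG p.2.1, iH p.2.2⁆ * iH p.1) *
      ⁅iG (c.aGH p.2.1 p.1), iH (p.1⁻¹ * p.2.2 * p.1)⁆⁻¹)

/-- The Brown–Loday group `η(G,H)`. -/
def EtaGroup (c : CompatibleActions G H) : Type _ :=
  Coprod G H ⧸ Subgroup.normalClosure (etaRels c)

instance (c : CompatibleActions G H) : Group (EtaGroup c) :=
  QuotientGroup.Quotient.group _

/-- The canonical map `G → η(G,H)`. -/
def etaG (c : CompatibleActions G H) : G →* EtaGroup c :=
  (QuotientGroup.mk' _).comp Coprod.inl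

/-- The canonical map `H → η(G,H)`, `h ↦ h^φ`. -/
def etaH (c : CompatibleActions G H) : H →* EtaGroup c :=
  (QuotientGroup.mk' _).comp Coprod.inr

/-- The set of tensors `T⊗(G,H) = {[g, h^φ]} ⊆ η(G,H)`. -/
def tensorSet (c : CompatibleActions G H) : Set (EtaGroup c) :=
  {x | ∃ g h, x = ⁅etaG c g, etaH c h⁆}

/-- The non-abelian tensor product `[G, H^φ] ≤ η(G,H)`. -/
def tensorSub (c : CompatibleActions G H) : Subgroup (EtaGroup c) :=
  Subgroup.closure (tensorSet c)

/-- The compatible pair of conjugation actions of `G` on itself, giving `ν(G) = η(G,G)`. -/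
def conjActions (G : Type*) [Group G] : CompatibleActions G G where
  aGH g h := h⁻¹ * g * h
  aHG h g := g⁻¹ * h * g
  aGH_one := by intro g; group
  aGH_mul := by intros; group
  aGH_hom := by intros; group
  aHG_one := by intro h; group
  aHG_mul := by intros; group
  aHG_hom := by intros; group
  compat₁ := by intros; group
  compat₂ := by intros; group

/-- `ν(G)`. -/
abbrev NuGroup (G : Type*) [Group G] := EtaGroup (conjActions G)

/-- A group is locally finite if all its finitely generated subgroups are finite. -/
def IsLocallyFiniteGroup (K : Type*) [Group K] : Prop :=
  ∀ S : Subgroup K, S.FG → Finite S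

/-- A group is polycyclic-by-finite if it has a normal subgroup of finite index which is
polycyclic (equivalently: solvable with all subgroups finitely generated). -/
def IsPolycyclicByFinite (G : Type*) [Group G] : Prop :=
  ∃ N : Subgroup G, N.Normal ∧ N.FiniteIndex ∧ IsSolvable N ∧ ∀ S : Subgroup N, S.FG

@[ext]
structure Heis where
  a : ℤ
  b : ℤ
  c : ℤ

namespace Heis

instance : Mul Heis := ⟨fun x y => ⟨x.a + y.a, x.b + y.b, x.c + y.c + x.a * y.b⟩⟩
instance : One Heis := ⟨⟨0, 0, 0⟩⟩
instance : Inv Heis := ⟨fun x => ⟨-x.a, -x.b, x.a * x.b - x.c⟩⟩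

@[simp] lemma mul_a (x y : Heis) : (x * y).a = x.a + y.a := rfl
@[simp] lemma mul_b (x y : Heis) : (x * y).b = x.b + y.b := rfl
@[simp] lemma mul_c (x y : Heis) : (x * y).c = x.c + y.c + x.a * y.b := rfl
@[simp] lemma one_a : (1 : Heis).a = 0 := rfl
@[simp] lemma one_b : (1 : Heis).b = 0 := rfl
@[simp] lemma one_c : (1 : Heis).c = 0 := rfl
@[simp] lemma inv_a (x : Heis) : (x⁻¹).a = -x.a := rfl
@[simp] lemma inv_b (x : Heis) : (x⁻¹).b = -x.b := rfl
@[simp] lemma inv_c (x : Heis) : (x⁻¹).c = x.a * x.b - x.c := rfl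

instance : Group Heis where
  mul_assoc x y z := by ext <;> simp <;> ring
  one_mul x := by ext <;> simp
  mul_one x := by ext <;> simp
  inv_mul_cancel x := by ext <;> simp <;> ring

lemma pow_central (c : ℤ) (n : ℕ) : (⟨0, 0, c⟩ : Heis) ^ n = ⟨0, 0, n * c⟩ := by
  induction n with
  | zero => ext <;> simp
  | succ n ih => rw [pow_succ, ih]; ext <;> simp <;> ring

lemma not_isOfFinOrder {c : ℤ} (hc : c ≠ 0) : ¬ IsOfFinOrder (⟨0, 0, c⟩ : Heis) := by
  intro h
  obtain ⟨n, hn, h1⟩ := h.exists_pow_eq_one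
  rw [pow_central] at h1
  have := congrArg Heis.c h1
  simp at this
  rcases this with h | h
  · omega
  · exact hc h

end Heis
section Lift

variable {G K : Type*} [Group G] [Group K]

/-- Lift a pair of homomorphisms satisfying the relators to `ν(G)`. -/
def nuLift (fG fH : G →* K)
    (hrel : ∀ r ∈ etaRels (conjActions G), Coprod.lift fG fH r = 1) :
    NuGroup G →* K :=
  QuotientGroup.lift _ (Coprod.lift fG fH) fun x hx =>
    MonoidHom.mem_ker.mp
      (Subgroup.normalClosure_le_normal
        (fun r hr => MonoidHom.mem_ker.mpr (hrel r hr)) hx)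

@[simp] lemma nuLift_etaG (fG fH : G →* K) (hrel) (g : G) :
    nuLift fG fH hrel (etaG (conjActions G) g) = fG g := by
  exact (QuotientGroup.lift_mk _ _ _).trans (by simp)

@[simp] lemma nuLift_etaH (fG fH : G →* K) (hrel) (g : G) :
    nuLift fG fH hrel (etaH (conjActions G) g) = fH g := by
  exact (QuotientGroup.lift_mk _ _ _).trans (by simp)

lemma relcheck (fG fH : G →* K)
    (h1 : ∀ g₁ g h : G, (fG g₁)⁻¹ * ⁅fG g, fH h⁆ * fG g₁ *
      ⁅fG (g₁⁻¹ * g * g₁), fH (g₁⁻¹ * h * g₁)⁆⁻¹ = 1)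
    (h2 : ∀ h₁ g h : G, (fH h₁)⁻¹ * ⁅fG g, fH h⁆ * fH h₁ *
      ⁅fG (h₁⁻¹ * g * h₁), fH (h₁⁻¹ * h * h₁)⁆⁻¹ = 1) :
    ∀ r ∈ etaRels (conjActions G), Coprod.lift fG fH r = 1 := by
  rintro r (⟨⟨g₁, g, h⟩, rfl⟩ | ⟨⟨h₁, g, h⟩, rfl⟩)
  · simpa [conjActions, commutatorElement_def, mul_assoc] using h1 g₁ g h
  · simpa [conjActions, commutatorElement_def, mul_assoc] using h2 h₁ g h

end Lift
section Maps

variable {G : Type*} [Group G]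

/-- The homomorphism `ρ : ν(G) → G`, `g ↦ g`, `g^φ ↦ g`. -/
def nuRho (G : Type*) [Group G] : NuGroup G →* G :=
  nuLift (MonoidHom.id G) (MonoidHom.id G)
    (relcheck _ _
      (by intros; simp only [MonoidHom.id_apply, commutatorElement_def]; group)
      (by intros; simp only [MonoidHom.id_apply, commutatorElement_def]; group))

lemma commutator_isOfFinOrder
    (hper : ∀ x ∈ tensorSub (conjActions G), IsOfFinOrder x) :
    ∀ x ∈ commutator G, IsOfFinOrder x := by
  intro x hx
  have hle : commutator G ≤ (tensorSub (conjActions G)).map (nuRho G) := by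
    rw [commutator_eq_closure, Subgroup.closure_le]
    rintro y ⟨g, h, rfl⟩
    exact ⟨⁅etaG (conjActions G) g, etaH (conjActions G) h⁆,
      Subgroup.subset_closure ⟨g, h, rfl⟩, by simp [map_commutatorElement, nuRho]⟩
  obtain ⟨y, hy, rfl⟩ := hle hx
  exact (nuRho G).isOfFinOrder (hper y hy)

/-- The homomorphism `G → Heis` induced by `f` in the `a`-slot. -/
def heisG (f : G →* Multiplicative ℤ) : G →* Heis where
  toFun g := ⟨(f g).toAdd, 0, 0⟩
  map_one' := by ext <;> simp
  map_mul' x y := by ext <;> simp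

/-- The homomorphism `G → Heis` induced by `f` in the `b`-slot. -/
def heisH (f : G →* Multiplicative ℤ) : G →* Heis where
  toFun g := ⟨0, (f g).toAdd, 0⟩
  map_one' := by ext <;> simp
  map_mul' x y := by ext <;> simp

@[simp] lemma heisG_a (f : G →* Multiplicative ℤ) (g : G) : (heisG f g).a = (f g).toAdd := rfl
@[simp] lemma heisG_b (f : G →* Multiplicative ℤ) (g : G) : (heisG f g).b = 0 := rfl
@[simp] lemma heisG_c (f : G →* Multiplicative ℤ) (g : G) : (heisG f g).c = 0 := rfl
@[simp] lemma heisH_a (f : G →* Multiplicative ℤ) (g : G) : (heisH f g).a = 0 := rfl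
@[simp] lemma heisH_b (f : G →* Multiplicative ℤ) (g : G) : (heisH f g).b = (f g).toAdd := rfl
@[simp] lemma heisH_c (f : G →* Multiplicative ℤ) (g : G) : (heisH f g).c = 0 := rfl

lemma heis_relcheck (f : G →* Multiplicative ℤ) :
    ∀ r ∈ etaRels (conjActions G), Coprod.lift (heisG f) (heisH f) r = 1 := by
  refine relcheck _ _ ?_ ?_ <;>
    · intro a g h
      ext <;> simp [commutatorElement_def] <;> ring

lemma hom_to_int_trivial
    (hper : ∀ x ∈ tensorSub (conjActions G), IsOfFinOrder x)
    (f : G →* Multiplicative ℤ) (g : G) : f g = 1 := by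
  by_contra hfg
  have ht : (f g).toAdd ≠ 0 := fun h => hfg (by
    have := congrArg Multiplicative.ofAdd h
    simpa using this)
  have hmem : ⁅etaG (conjActions G) g, etaH (conjActions G) g⁆ ∈ tensorSub (conjActions G) :=
    Subgroup.subset_closure ⟨g, g, rfl⟩
  have hfin := (nuLift (heisG f) (heisH f) (heis_relcheck f)).isOfFinOrder (hper _ hmem)
  rw [map_commutatorElement, nuLift_etaG, nuLift_etaH] at hfin
  have hcomm : ⁅heisG f g, heisH f g⁆ = (⟨0, 0, (f g).toAdd * (f g).toAdd⟩ : Heis) := by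
    ext <;> simp [commutatorElement_def] <;> ring
  rw [hcomm] at hfin
  exact Heis.not_isOfFinOrder (mul_ne_zero ht ht) hfin

end Maps
section GroupTheory

universe u

variable {G : Type*} [Group G]

lemma isOfFinOrder_subtype {H : Subgroup G} (x : ↥H) (h : IsOfFinOrder (x : G)) :
    IsOfFinOrder x := by
  obtain ⟨n, hn, h1⟩ := h.exists_pow_eq_one
  exact isOfFinOrder_iff_pow_eq_one.mpr ⟨n, hn, Subtype.ext (by push_cast [h1]; rfl)⟩

lemma Group.fg_of_subgroup_fg_of_finiteIndex (H : Subgroup G) (hfg : H.FG)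
    [H.FiniteIndex] : Group.FG G := by
  obtain ⟨S, hS, hSfin⟩ := (Subgroup.fg_iff H).mp hfg
  rw [Group.fg_iff]
  refine ⟨S ∪ Set.range (fun q : G ⧸ H => q.out), ?_, hSfin.union (Set.finite_range _)⟩
  rw [eq_top_iff]
  intro g _
  have hmem : ((g : G ⧸ H).out)⁻¹ * g ∈ H := by
    rw [← QuotientGroup.eq, QuotientGroup.out_eq']
  have h1 : (g : G ⧸ H).out ∈ Subgroup.closure (S ∪ Set.range (fun q : G ⧸ H => q.out)) :=
    Subgroup.subset_closure (Set.mem_union_right _ ⟨_, rfl⟩)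
  have h2 : ((g : G ⧸ H).out)⁻¹ * g ∈ Subgroup.closure (S ∪ Set.range (fun q : G ⧸ H => q.out)) := by
    have : H ≤ Subgroup.closure (S ∪ Set.range (fun q : G ⧸ H => q.out)) := by
      rw [← hS]
      exact Subgroup.closure_mono Set.subset_union_left
    exact this hmem
  simpa using mul_mem h1 h2

lemma finite_of_solvable_fg_torsion :
    ∀ (n : ℕ) (K : Type u) [Group K], derivedSeries K n = ⊥ →
      (∀ S : Subgroup K, S.FG) → (∀ x : K, IsOfFinOrder x) → Finite K := by
  intro n
  induction n with
  | zero =>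
    intro K _ hder _ _
    have : ∀ x : K, x = 1 := fun x => Subgroup.mem_bot.mp (hder ▸ Subgroup.mem_top x)
    have : Subsingleton K := ⟨fun a b => by rw [this a, this b]⟩
    exact Finite.of_subsingleton
  | succ n ih =>
    intro K _ hder hfg htor
    haveI : Group.FG K := ⟨hfg ⊤⟩
    have hofsurj : Function.Surjective (Abelianization.of (G := K)) :=
      fun y => Quotient.exists_rep y
    haveI : Group.FG (Abelianization K) := Group.fg_of_surjective hofsurj
    have hq : Finite (Abelianization K) :=
      CommGroup.finite_of_fg_torsion _
        (IsTorsion.of_surjective hofsurj htor)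
    set D := commutator K with hD
    have key : ∀ m, Subgroup.map D.subtype (derivedSeries ↥D m) ≤ derivedSeries K (m + 1) := by
      intro m
      induction m with
      | zero =>
        rw [derivedSeries_succ]
        show Subgroup.map D.subtype ⊤ ≤ _
        rw [← MonoidHom.range_eq_map, Subgroup.range_subtype]
        rw [derivedSeries_zero]
        exact le_of_eq rfl
      | succ m ihm =>
        rw [derivedSeries_succ, derivedSeries_succ, Subgroup.map_commutator]
        exact Subgroup.commutator_mono ihm ihm
    have hDder : derivedSeries ↥D n = ⊥ := by
      have := (key n).trans (le_of_eq hder)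
      rwa [le_bot_iff, Subgroup.map_eq_bot_iff_of_injective _ D.subtype_injective] at this
    have hDfg : ∀ S : Subgroup ↥D, S.FG := by
      intro S
      haveI : Group.FG ↥(S.map D.subtype) := (Group.fg_iff_subgroup_fg _).mpr (hfg _)
      have e := S.equivMapOfInjective D.subtype D.subtype_injective
      haveI : Group.FG ↥S := Group.fg_of_surjective (f := e.symm.toMonoidHom) e.symm.surjective
      exact (Group.fg_iff_subgroup_fg S).mp ‹_›
    have hDtor : ∀ x : ↥D, IsOfFinOrder x := fun x => isOfFinOrder_subtype x (htor _)
    have hDfin : Finite ↥D := ih ↥D hDder hDfg hDtor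
    have hqfin : Finite (K ⧸ D) := hq
    exact Finite.of_equiv _ (Subgroup.groupEquivQuotientProdSubgroup (s := D)).symm

end GroupTheory
/-- If `G` is polycyclic-by-finite and `[G,G^φ]` is periodic, then `G` is finite. -/
theorem finite_of_polycyclicByFinite_of_tensorSquare_periodic {G : Type*} [Group G]
    (h : IsPolycyclicByFinite G)
    (hper : ∀ x ∈ tensorSub (conjActions G), IsOfFinOrder x) : Finite G := by
  obtain ⟨N, hNnorm, hNfi, hNsol, hNfg⟩ := h
  haveI := hNfi
  -- G is finitely generated
  have hNFG : N.FG := (Group.fg_iff_subgroup_fg N).mp ⟨hNfg ⊤⟩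
  haveI hGFG : Group.FG G := Group.fg_of_subgroup_fg_of_finiteIndex N hNFG
  -- the commutator subgroup is periodic
  have hcomm := commutator_isOfFinOrder hper
  -- the abelianization is finite
  have hofsurj : Function.Surjective (Abelianization.of (G := G)) :=
    fun y => Quotient.exists_rep y
  haveI : Group.FG (Abelianization G) := Group.fg_of_surjective hofsurj
  haveI : AddGroup.FG (Additive (Abelianization G)) := GroupFG.iff_add_fg.mp ‹_›
  have hAbFin : Finite (Abelianization G) := by
    obtain ⟨n, ι, fι, p, hp, e, ⟨φ⟩⟩ :=
      AddCommGroup.equiv_free_prod_directSum_zmod (Additive (Abelianization G))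
    rcases Nat.eq_zero_or_pos n with hn | hn
    · subst hn
      haveI : ∀ i : ι, NeZero (p i ^ e i) := fun i => ⟨pow_ne_zero _ (hp i).pos.ne'⟩
      haveI : Finite (DirectSum ι fun i => ZMod (p i ^ e i)) :=
        Finite.of_equiv _ (DFinsupp.equivFunOnFintype (ι := ι)).symm
      haveI : Subsingleton (Fin 0 →₀ ℤ) := ⟨fun a b => Finsupp.ext fun i => i.elim0⟩
      haveI : Finite (Additive (Abelianization G)) := Finite.of_equiv _ φ.symm.toEquiv
      exact Finite.of_equiv _ Additive.toMul
    · exfalso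
      set i : Fin n := ⟨0, hn⟩
      set ψ : Additive (Abelianization G) →+ ℤ :=
        (Finsupp.applyAddHom i).comp ((AddMonoidHom.fst _ _).comp φ.toAddMonoidHom) with hψ
      set f : Abelianization G →* Multiplicative ℤ := AddMonoidHom.toMultiplicativeRight ψ with hf
      have htriv := hom_to_int_trivial hper (f.comp Abelianization.of)
      set a : Additive (Abelianization G) := φ.symm (Finsupp.single i 1, 0) with ha
      obtain ⟨g, hg⟩ := hofsurj a.toMul
      have h1 : f a.toMul = Multiplicative.ofAdd (1 : ℤ) := by
        rw [hf]
        simp only [AddMonoidHom.toMultiplicativeRight_apply_apply]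
        congr 1
        rw [hψ]
        simp [ha]
      have h2 := htriv g
      rw [MonoidHom.comp_apply, hg, h1] at h2
      exact absurd (Multiplicative.ofAdd.injective (h2.trans rfl)) one_ne_zero
  -- G is periodic
  have htorG : ∀ x : G, IsOfFinOrder x := by
    have tQ : Monoid.IsTorsion (G ⧸ commutator G) :=
      @isTorsion_of_finite _ _ hAbFin
    have tN : Monoid.IsTorsion ↥(commutator G) :=
      fun x => isOfFinOrder_subtype x (hcomm x.1 x.2)
    exact IsTorsion.extension_closed (QuotientGroup.ker_mk' (commutator G)).symm tQ tN
  -- N is finite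
  obtain ⟨n, hn⟩ := hNsol.solvable
  have hNfin : Finite ↥N := finite_of_solvable_fg_torsion n ↥N hn hNfg
    (fun x => isOfFinOrder_subtype x (htorG x))
  haveI : Finite (G ⧸ N) := Subgroup.finite_quotient_of_finiteIndex (H := N)
  exact Finite.of_equiv _ (Subgroup.groupEquivQuotientProdSubgroup (s := N)).symm
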